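/- For every fixed batch size b ≥ 1 there exists N*_b such that for every N > N*_b there exist N differentiable strongly convex loss functions f₁, …, f_N on ℝ (explicitly, with δ = δ_{N,b} > δ* the unique solution of (1+δ)/(1+δ⁴) = b/N, take f_n(w) = w²/(2δ) − w for n = 1,…,N−1 and f_N(w) = w²/(2δ) + (bδ⁴ + b − 1)w) such that mini-batch ADAM with batch size b applied to this problem diverges in expectation for every initial point w₁: E[F(w_t)] does not converge to min_w F(w), where F = (1/N)∑_{n=1}^N f_n. -/

import Mathlib

open MeasureTheory Filter

lemma deriv_quad (a e w : ℝ) : deriv (fun x : ℝ => a * x ^ 2 + e * x) w = 2 * a * w + e := by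
  have h1 : HasDerivAt (fun x : ℝ => a * x ^ 2 + e * x) (a * (2 * w ^ 1) + e * 1) w :=
    ((hasDerivAt_pow 2 w).const_mul a).add ((hasDerivAt_id w).const_mul e)
  rw [h1.deriv]; ring

lemma abs_step_le (α β₂ g vp : ℝ) (hα : 0 < α) (hβ₂0 : 0 ≤ β₂) (hβ₂1 : β₂ < 1) (hv : 0 ≤ vp) :
    |α * g / Real.sqrt (β₂ * vp + (1 - β₂) * g ^ 2)| ≤ α / Real.sqrt (1 - β₂) := by
  have h1β : 0 < 1 - β₂ := by linarith
  rcases eq_or_ne g 0 with rfl | hg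
  · simp; positivity
  · have hg2 : 0 < g ^ 2 := by positivity
    have hvpos : 0 < β₂ * vp + (1 - β₂) * g ^ 2 := by nlinarith [mul_nonneg hβ₂0 hv]
    have hle : Real.sqrt ((1 - β₂) * g ^ 2) ≤ Real.sqrt (β₂ * vp + (1 - β₂) * g ^ 2) :=
      Real.sqrt_le_sqrt (by nlinarith [mul_nonneg hβ₂0 hv])
    have heq : Real.sqrt ((1 - β₂) * g ^ 2) = Real.sqrt (1 - β₂) * |g| := by
      rw [Real.sqrt_mul h1β.le, Real.sqrt_sq_eq_abs]
    have hs1 : 0 < Real.sqrt (1 - β₂) := Real.sqrt_pos.2 h1β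
    have hsum : 0 < Real.sqrt (β₂ * vp + (1 - β₂) * g ^ 2) := Real.sqrt_pos.2 hvpos
    rw [abs_div, abs_of_nonneg hsum.le, abs_mul, abs_of_nonneg hα.le]
    rw [div_le_div_iff₀ hsum hs1]
    calc α * |g| * Real.sqrt (1 - β₂) = α * (Real.sqrt (1 - β₂) * |g|) := by ring
      _ ≤ α * Real.sqrt (β₂ * vp + (1 - β₂) * g ^ 2) := by
          apply mul_le_mul_of_nonneg_left _ hα.le
          rw [← heq]; exact hle

lemma v_unroll (β : ℝ) (v u : ℕ → ℝ) (h0 : v 0 = 0)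
    (hrec : ∀ t, 1 ≤ t → v t = β * v (t - 1) + (1 - β) * u t) :
    ∀ t, v t = (1 - β) * ∑ k ∈ Finset.range t, β ^ k * u (t - k) := by
  intro t
  induction t with
  | zero => simpa using h0
  | succ t ih =>
    rw [hrec (t + 1) (Nat.le_add_left 1 t), Nat.add_sub_cancel, ih,
      Finset.sum_range_succ' (fun k => β ^ k * u (t + 1 - k))]
    simp only [Nat.succ_sub_succ, Nat.sub_zero, pow_zero, one_mul]
    have hS : β * ∑ k ∈ Finset.range t, β ^ k * u (t - k)
        = ∑ x ∈ Finset.range t, β ^ (x + 1) * u (t - x) := by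
      rw [Finset.mul_sum]; exact Finset.sum_congr rfl fun k _ => by ring
    rw [mul_add, ← hS]; ring

lemma summable_aux (β A C : ℝ) (hβ0 : 0 ≤ β) (hβ1 : β < 1) :
    Summable (fun k : ℕ => (1 - β) * (β ^ k * (A + C * k) ^ 2)) := by
  apply Summable.mul_left
  have hn : ‖β‖ < 1 := by rwa [Real.norm_eq_abs, abs_of_nonneg hβ0]
  have hg : Summable fun k : ℕ => β ^ k := summable_geometric_of_lt_one hβ0 hβ1
  have h1 : Summable fun k : ℕ => (k : ℝ) * β ^ k := by
    simpa using summable_pow_mul_geometric_of_norm_lt_one 1 hn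
  have h2 : Summable fun k : ℕ => (k : ℝ) ^ 2 * β ^ k :=
    summable_pow_mul_geometric_of_norm_lt_one 2 hn
  have := ((hg.mul_left (A ^ 2)).add (h1.mul_left (2 * A * C))).add (h2.mul_left (C ^ 2))
  convert this using 1
  funext k; ring

lemma strongConvexOn_quad (d e : ℝ) (hd : 0 < d) :
    StrongConvexOn Set.univ (1/d) (fun x : ℝ => x ^ 2 / (2 * d) + e * x) := by
  rw [strongConvexOn_iff_convex]
  have heq : (fun x : ℝ => x ^ 2 / (2 * d) + e * x - 1 / d / 2 * ‖x‖ ^ 2)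
      = fun x : ℝ => (e • LinearMap.id (R := ℝ) (M := ℝ)) x := by
    funext x
    simp only [LinearMap.smul_apply, LinearMap.id_coe, id_eq, smul_eq_mul, Real.norm_eq_abs,
      sq_abs]
    field_simp
    ring
  rw [heq]
  exact (e • LinearMap.id (R := ℝ) (M := ℝ)).convexOn convex_univ

lemma delta_exists (b N : ℕ) (hb : 1 ≤ b) (hN : 17 * b < N) :
    ∃ δ : ℝ, 2 < δ ∧ (1 + δ) / (1 + δ ^ 4) = (b : ℝ) / (N : ℝ) := by
  have hbR : (1 : ℝ) ≤ b := by exact_mod_cast hb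
  have hNR : 17 * (b : ℝ) < N := by exact_mod_cast hN
  have hN18 : (18 : ℝ) ≤ N := by
    have h1 : 17 * b + 1 ≤ N := hN
    have h2 : ((17 * b + 1 : ℕ) : ℝ) ≤ N := by exact_mod_cast h1
    push_cast at h2
    linarith
  have hcont : Continuous (fun x : ℝ => (1 + x) / (1 + x ^ 4)) := by
    apply Continuous.div (by continuity) (by continuity)
    intro x; positivity
  have hlow : (1 + (N : ℝ)) / (1 + (N : ℝ) ^ 4) ≤ (b : ℝ) / (N : ℝ) := by
    rw [div_le_div_iff₀ (by positivity) (by positivity)]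
    have h1 : (N : ℝ) ≤ (N : ℝ) ^ 2 := by nlinarith
    have h2 : 18 * (N : ℝ) ^ 2 ≤ (N : ℝ) ^ 4 := by
      nlinarith [mul_nonneg (sq_nonneg (N : ℝ)) (show (0 : ℝ) ≤ (N : ℝ) ^ 2 - 18 by nlinarith)]
    have h3 : (1 : ℝ) * (1 + (N : ℝ) ^ 4) ≤ b * (1 + (N : ℝ) ^ 4) :=
      mul_le_mul_of_nonneg_right hbR (by positivity)
    nlinarith
  have hhigh : (b : ℝ) / (N : ℝ) < (1 + (2 : ℝ)) / (1 + 2 ^ 4) := by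
    rw [div_lt_div_iff₀ (by positivity) (by norm_num)]
    nlinarith
  have hmem : (b : ℝ) / (N : ℝ) ∈ Set.Icc ((1 + (N : ℝ)) / (1 + (N : ℝ) ^ 4))
      ((1 + (2 : ℝ)) / (1 + 2 ^ 4)) := ⟨hlow, hhigh.le⟩
  obtain ⟨δ, hδmem, hδeq⟩ := intermediate_value_Icc' (by linarith : (2 : ℝ) ≤ N)
    hcont.continuousOn hmem
  refine ⟨δ, ?_, hδeq⟩
  rcases lt_or_eq_of_le hδmem.1 with h | h
  · exact h
  · exfalso
    subst h
    norm_num at hδeq hhigh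
    linarith

noncomputable def adamC (N b : ℕ) (δ : ℝ) : Fin N → ℝ :=
  fun n => if (n : ℕ) + 1 < N then -1 else (b : ℝ) * δ ^ 4 + (b : ℝ) - 1

noncomputable def adamF (N b : ℕ) (δ : ℝ) : Fin N → ℝ → ℝ :=
  fun n x => x ^ 2 / (2 * δ) + adamC N b δ n * x

lemma adamC_sum (N b : ℕ) (δ : ℝ) (hN : 0 < N) (s : Finset (Fin N)) :
    ∑ n ∈ s, adamC N b δ n = -(s.card : ℝ) +
      (if (⟨N - 1, Nat.sub_lt hN one_pos⟩ : Fin N) ∈ s then (b : ℝ) * δ ^ 4 + (b : ℝ) else 0) := by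
  set last : Fin N := ⟨N - 1, Nat.sub_lt hN one_pos⟩ with hlast
  have hc : ∀ n : Fin N, adamC N b δ n =
      (if n = last then (b : ℝ) * δ ^ 4 + (b : ℝ) else 0) + (-1) := by
    intro n
    by_cases hn : (n : ℕ) + 1 < N
    · have hne : n ≠ last := by
        intro h
        rw [h] at hn
        simp only [hlast] at hn
        omega
      rw [adamC, if_pos hn, if_neg hne]
      ring
    · have heq : n = last := by
        have := n.isLt
        apply Fin.ext
        simp only [hlast]
        omega
      rw [adamC, if_neg hn, if_pos heq]
      ring
  rw [Finset.sum_congr rfl fun n _ => hc n, Finset.sum_add_distrib, Finset.sum_const,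
    Finset.sum_ite_eq' s last (fun _ => (b : ℝ) * δ ^ 4 + (b : ℝ))]
  simp [add_comm]

lemma adam_deriv (N b : ℕ) (δ : ℝ) (hN : 0 < N) (hb : 0 < b) (hδ : 0 < δ)
    (s : Finset (Fin N)) (hcard : s.card = b) (x : ℝ) :
    deriv (fun y => (1 / (b : ℝ)) * ∑ n ∈ s, adamF N b δ n y) x
      = x / δ + (if (⟨N - 1, Nat.sub_lt hN one_pos⟩ : Fin N) ∈ s then δ ^ 4 else -1) := by
  have hbR : (0 : ℝ) < b := by exact_mod_cast hb
  have hfun : (fun y => (1 / (b : ℝ)) * ∑ n ∈ s, adamF N b δ n y)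
      = fun y => (1 / (2 * δ)) * y ^ 2 + ((1 / (b : ℝ)) * ∑ n ∈ s, adamC N b δ n) * y := by
    funext y
    simp only [adamF, Finset.sum_add_distrib, Finset.sum_const, nsmul_eq_mul,
      ← Finset.sum_mul, hcard]
    field_simp
  rw [hfun, deriv_quad, adamC_sum N b δ hN s, hcard]
  split_ifs with h
  · field_simp
    ring
  · field_simp
    ring

lemma adam_objective (N b : ℕ) (δ : ℝ) (hN : 0 < N) (hδ : 0 < δ)
    (hrel : (N : ℝ) * (1 + δ) = (b : ℝ) * (1 + δ ^ 4)) (x : ℝ) :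
    (1 / (N : ℝ)) * ∑ n : Fin N, adamF N b δ n x = x ^ 2 / (2 * δ) + δ * x := by
  have hNR : (0 : ℝ) < N := by exact_mod_cast hN
  have hsum : ∑ n : Fin N, adamC N b δ n = (N : ℝ) * δ := by
    rw [adamC_sum N b δ hN Finset.univ, if_pos (Finset.mem_univ _)]
    simp only [Finset.card_univ, Fintype.card_fin]
    linarith
  simp only [adamF, Finset.sum_add_distrib, Finset.sum_const, nsmul_eq_mul,
    ← Finset.sum_mul, hsum, Finset.card_univ, Fintype.card_fin]
  field_simp
set_option maxHeartbeats 1000000 in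
theorem adam_diverges_minibatch_fixed_batch (α β₂ : ℝ)
    (hα : 0 < α) (hβ₂0 : 0 ≤ β₂) (hβ₂1 : β₂ < 1) (b : ℕ) (hb : 1 ≤ b) :
    ∃ Nstar : ℕ, ∀ N : ℕ, Nstar < N →
      ∃ (f : Fin N → ℝ → ℝ) (δ : ℝ), 2 < δ ∧
        (1 + δ) / (1 + δ ^ 4) = (b : ℝ) / (N : ℝ) ∧
        (∀ n : Fin N, (n : ℕ) + 1 < N → f n = fun x => x ^ 2 / (2 * δ) - x) ∧
        (∀ n : Fin N, (n : ℕ) + 1 = N →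
          f n = fun x => x ^ 2 / (2 * δ) + ((b : ℝ) * δ ^ 4 + (b : ℝ) - 1) * x) ∧
        (∀ n, Differentiable ℝ (f n)) ∧
        (∀ n, ∃ c > 0, StrongConvexOn Set.univ c (f n)) ∧
        -- divergence of mini-batch ADAM for every initial point
        (∀ (Ω : Type) (_mΩ : MeasurableSpace Ω) (μ : Measure Ω), IsProbabilityMeasure μ →
          ∀ B : ℕ → Ω → Finset (Fin N),
            (∀ t, @Measurable Ω (Finset (Fin N)) _mΩ ⊤ (B t)) →
            ProbabilityTheory.iIndepFun (m := fun _ => (⊤ : MeasurableSpace (Finset (Fin N)))) B μ →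
            (∀ t ω, (B t ω).card = b) →
            (∀ (t : ℕ) (s : Finset (Fin N)), s.card = b →
              μ {ω | B t ω = s} = ((N.choose b : ENNReal))⁻¹) →
          ∀ (w v : ℕ → Ω → ℝ) (w₁ : ℝ),
            (∀ ω, w 1 ω = w₁) →
            (∀ ω, v 0 ω = 0) →
            (∀ t : ℕ, 1 ≤ t → ∀ ω,
              v t ω = β₂ * v (t - 1) ω +
                (1 - β₂) * (deriv (fun x => (1 / (b : ℝ)) * ∑ n ∈ B t ω, f n x) (w t ω)) ^ 2) →
            (∀ t : ℕ, 1 ≤ t → ∀ ω,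
              w (t + 1) ω = w t ω -
                α * deriv (fun x => (1 / (b : ℝ)) * ∑ n ∈ B t ω, f n x) (w t ω) /
                  Real.sqrt (v t ω)) →
          ∀ Fmin : ℝ,
            IsLeast (Set.range fun x : ℝ => (1 / (N : ℝ)) * ∑ n, f n x) Fmin →
            ¬ Tendsto (fun t => ∫ ω, (1 / (N : ℝ)) * ∑ n, f n (w t ω) ∂μ) atTop
              (nhds Fmin)) := by
  refine ⟨17 * b, fun N hN => ?_⟩
  obtain ⟨δ, hδ2, hδeq⟩ := delta_exists b N hb hN
  have hN0 : 0 < N := lt_of_le_of_lt (Nat.zero_le _) hN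
  have hb0 : 0 < b := hb
  have hNR : (0 : ℝ) < N := by exact_mod_cast hN0
  have hbR : (0 : ℝ) < b := by exact_mod_cast hb0
  have hδ0 : (0 : ℝ) < δ := by linarith
  have hδne : δ ≠ 0 := ne_of_gt hδ0
  have hδ4 : (1 : ℝ) ≤ δ ^ 4 := by nlinarith [sq_nonneg δ, sq_nonneg (δ ^ 2 - 1)]
  have hrel : (N : ℝ) * (1 + δ) = (b : ℝ) * (1 + δ ^ 4) := by
    rw [div_eq_div_iff (by positivity) (ne_of_gt hNR)] at hδeq
    linarith
  refine ⟨adamF N b δ, δ, hδ2, hδeq, ?_, ?_, ?_, ?_, ?_⟩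
  · -- small losses
    intro n hn
    funext x
    simp only [adamF, adamC, if_pos hn]
    ring
  · -- last loss
    intro n hn
    funext x
    simp only [adamF, adamC, if_neg (by omega : ¬ ((n : ℕ) + 1 < N))]
  · -- differentiability
    intro n
    exact ((differentiable_pow 2).div_const _).add (differentiable_id.const_mul _)
  · -- strong convexity
    intro n
    exact ⟨1 / δ, by positivity, strongConvexOn_quad δ (adamC N b δ n) hδ0⟩
  · -- divergence
    intro Ω mΩ μ hμ B hBmeas hBindep hBcard hBunif w v w₁ hw1 hv0 hvrec hwrec Fmin hFmin hT
    -- abbreviations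
    obtain ⟨σ, hσdef⟩ : ∃ σ : ℕ → Ω → ℝ, ∀ t ω,
        σ t ω = if (⟨N - 1, Nat.sub_lt hN0 one_pos⟩ : Fin N) ∈ B t ω then δ ^ 4 else -1 :=
      ⟨_, fun _ _ => rfl⟩
    obtain ⟨g, hgdef⟩ : ∃ g : ℕ → Ω → ℝ, ∀ t ω, g t ω = w t ω / δ + σ t ω :=
      ⟨_, fun _ _ => rfl⟩
    have hderiv : ∀ t ω,
        deriv (fun x => (1 / (b : ℝ)) * ∑ n ∈ B t ω, adamF N b δ n x) (w t ω) = g t ω := by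
      intro t ω
      rw [hgdef, hσdef]
      exact adam_deriv N b δ hN0 hb0 hδ0 (B t ω) (hBcard t ω) (w t ω)
    have hv' : ∀ t, 1 ≤ t → ∀ ω, v t ω = β₂ * v (t - 1) ω + (1 - β₂) * g t ω ^ 2 :=
      fun t ht ω => by rw [hvrec t ht ω, hderiv t ω]
    have hw' : ∀ t, 1 ≤ t → ∀ ω,
        w (t + 1) ω = w t ω - α * g t ω / Real.sqrt (v t ω) :=
      fun t ht ω => by rw [hwrec t ht ω, hderiv t ω]
    have hσcases : ∀ t ω, σ t ω = δ ^ 4 ∨ σ t ω = -1 := by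
      intro t ω
      rw [hσdef]
      by_cases h : (⟨N - 1, Nat.sub_lt hN0 one_pos⟩ : Fin N) ∈ B t ω
      · exact Or.inl (if_pos h)
      · exact Or.inr (if_neg h)
    have hσabs : ∀ t ω, |σ t ω| ≤ δ ^ 4 := by
      intro t ω
      rcases hσcases t ω with h | h <;> rw [h]
      · rw [abs_of_nonneg (by positivity)]
      · rw [abs_neg, abs_one]; exact hδ4
    have hgub : ∀ t ω, |g t ω| ≤ |w t ω| / δ + δ ^ 4 := by
      intro t ω
      rw [hgdef]
      calc |w t ω / δ + σ t ω| ≤ |w t ω / δ| + |σ t ω| := abs_add_le _ _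
        _ ≤ |w t ω| / δ + δ ^ 4 := by
            rw [abs_div, abs_of_nonneg hδ0.le]
            exact add_le_add (le_refl _) (hσabs t ω)
    -- constants
    have h1β : 0 < 1 - β₂ := by linarith
    set C : ℝ := α / Real.sqrt (1 - β₂) with hCdef
    have hC : 0 < C := div_pos hα (Real.sqrt_pos.2 h1β)
    set A : ℝ := δ + 1 + δ ^ 4 with hAdef
    have hA : 0 < A := by positivity
    set V : ℝ := ∑' k : ℕ, (1 - β₂) * (β₂ ^ k * (A + C * k) ^ 2) with hVdef
    have hVsum : Summable (fun k : ℕ => (1 - β₂) * (β₂ ^ k * (A + C * k) ^ 2)) :=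
      summable_aux β₂ A C hβ₂0 hβ₂1
    have hV0 : 0 < V := by
      have h0 : (1 - β₂) * (β₂ ^ (0 : ℕ) * (A + C * ((0 : ℕ) : ℝ)) ^ 2) ≤ V :=
        Summable.le_tsum hVsum 0 fun j _ => by positivity
      simp only [pow_zero, Nat.cast_zero, mul_zero, add_zero, one_mul] at h0
      nlinarith [mul_pos h1β (pow_pos hA 2)]
    set S : ℝ := α * δ / Real.sqrt V with hSdef
    have hS : 0 < S := div_pos (by positivity) (Real.sqrt_pos.2 hV0)
    set cc : ℝ := min 1 (S / 3) with hccdef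
    have hcc : 0 < cc := lt_min one_pos (by positivity)
    -- nonnegativity of v
    have hvnn : ∀ t ω, 0 ≤ v t ω := by
      intro t ω
      induction t with
      | zero => exact le_of_eq (hv0 ω).symm
      | succ t ih =>
        have hr := hv' (t + 1) (Nat.le_add_left 1 t) ω
        rw [Nat.add_sub_cancel] at hr
        rw [hr]
        have h1 : 0 ≤ β₂ * v t ω := mul_nonneg hβ₂0 ih
        have h2 : 0 ≤ (1 - β₂) * g (t + 1) ω ^ 2 := mul_nonneg h1β.le (sq_nonneg _)
        linarith
    -- step upper bound
    have hstep : ∀ t, 1 ≤ t → ∀ ω, |w (t + 1) ω - w t ω| ≤ C := by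
      intro t ht ω
      rw [hw' t ht ω]
      have heq : w t ω - α * g t ω / Real.sqrt (v t ω) - w t ω
          = -(α * g t ω / Real.sqrt (v t ω)) := by ring
      rw [heq, abs_neg, hv' t ht ω, hCdef]
      exact abs_step_le α β₂ (g t ω) (v (t - 1) ω) hα hβ₂0 hβ₂1 (hvnn _ ω)
    -- drift bound
    have hdrift : ∀ τ, 1 ≤ τ → ∀ (j : ℕ) (ω : Ω), |w (τ + j) ω - w τ ω| ≤ C * j := by
      intro τ hτ j ω
      induction j with
      | zero => simp
      | succ j ih =>
        have h1 := hstep (τ + j) (by omega) ω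
        have hcast : ((j + 1 : ℕ) : ℝ) = (j : ℝ) + 1 := by push_cast; ring
        rw [hcast]
        calc |w (τ + (j + 1)) ω - w τ ω|
            ≤ |w (τ + j + 1) ω - w (τ + j) ω| + |w (τ + j) ω - w τ ω| := by
              rw [show τ + (j + 1) = τ + j + 1 from rfl]
              have h2 : w (τ + j + 1) ω - w τ ω
                  = (w (τ + j + 1) ω - w (τ + j) ω) + (w (τ + j) ω - w τ ω) := by ring
              rw [h2]
              exact abs_add_le _ _
          _ ≤ C + C * j := add_le_add h1 ih
          _ = C * ((j : ℝ) + 1) := by ring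
    -- key: step has size at least S near the minimizer
    have hkey : ∀ t, 1 ≤ t → ∀ ω, |w t ω + δ ^ 2| ≤ 1 → S ≤ |w (t + 1) ω - w t ω| := by
      intro t ht ω hnear
      obtain ⟨hn1, hn2⟩ := abs_le.1 hnear
      have hwt : |w t ω| ≤ δ ^ 2 + 1 := by
        rw [abs_le]
        constructor <;> nlinarith
      -- history bound on gradients
      have hist : ∀ k, k < t → g (t - k) ω ^ 2 ≤ (A + C * k) ^ 2 := by
        intro k hk
        have hτ : 1 ≤ t - k := by omega
        have hτk : (t - k) + k = t := by omega
        have hd := hdrift (t - k) hτ k ω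
        rw [hτk] at hd
        have hwk : |w (t - k) ω| ≤ δ ^ 2 + 1 + C * k := by
          have h2 : w (t - k) ω = w t ω + (w (t - k) ω - w t ω) := by ring
          rw [h2]
          refine (abs_add_le _ _).trans ?_
          rw [abs_sub_comm]
          linarith
        have hgk : |g (t - k) ω| ≤ A + C * k := by
          refine (hgub (t - k) ω).trans ?_
          have h1 : |w (t - k) ω| / δ ≤ (δ ^ 2 + 1 + C * k) / δ :=
            (div_le_div_iff_of_pos_right hδ0).2 hwk
          have h2 : (δ ^ 2 + 1 + C * k) / δ ≤ δ + 1 + C * k := by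
            rw [div_le_iff₀ hδ0]
            have hck : (0 : ℝ) ≤ C * k := mul_nonneg hC.le (Nat.cast_nonneg k)
            nlinarith
          rw [hAdef]
          linarith
        calc g (t - k) ω ^ 2 = |g (t - k) ω| ^ 2 := (sq_abs _).symm
          _ ≤ (A + C * k) ^ 2 := by
              apply pow_le_pow_left₀ (abs_nonneg _) hgk
      -- v bounded by V
      have hvt : v t ω ≤ V := by
        have hun : v t ω = (1 - β₂) * ∑ k ∈ Finset.range t, β₂ ^ k * g (t - k) ω ^ 2 :=
          v_unroll β₂ (fun τ => v τ ω) (fun τ => g τ ω ^ 2) (hv0 ω)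
            (fun τ hτ => hv' τ hτ ω) t
        rw [hun, Finset.mul_sum]
        refine le_trans (Finset.sum_le_sum fun k hk => ?_)
          (Summable.sum_le_tsum (Finset.range t) (fun k _ => by positivity) hVsum)
        have h1 := hist k (Finset.mem_range.1 hk)
        have hb2k : (0 : ℝ) ≤ β₂ ^ k := pow_nonneg hβ₂0 k
        exact mul_le_mul_of_nonneg_left (mul_le_mul_of_nonneg_left h1 hb2k) h1β.le
      -- gradient bounded below
      have hglb : δ ≤ |g t ω| := by
        rcases hσcases t ω with h | h
        · have hwd : -δ - 1 ≤ w t ω / δ := by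
            rw [le_div_iff₀ hδ0]
            nlinarith
          have hge : δ ≤ g t ω := by
            rw [hgdef, h]
            nlinarith [sq_nonneg (δ ^ 2 - 1)]
          exact hge.trans (le_abs_self _)
        · have hwd : w t ω / δ ≤ 1 - δ := by
            rw [div_le_iff₀ hδ0]
            nlinarith
          have hle : g t ω ≤ -δ := by
            rw [hgdef, h]
            linarith
          calc δ ≤ -g t ω := by linarith
            _ ≤ |g t ω| := neg_le_abs _
      -- v strictly positive
      have hvpos : 0 < v t ω := by
        rw [hv' t ht ω]
        have h1 : 0 ≤ β₂ * v (t - 1) ω := mul_nonneg hβ₂0 (hvnn _ ω)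
        have h2 : 0 < g t ω ^ 2 := by
          rw [← sq_abs]
          exact pow_pos (lt_of_lt_of_le hδ0 hglb) 2
        nlinarith
      -- conclude step lower bound
      rw [hw' t ht ω]
      have heq : w t ω - α * g t ω / Real.sqrt (v t ω) - w t ω
          = -(α * g t ω / Real.sqrt (v t ω)) := by ring
      rw [heq, abs_neg, abs_div, abs_mul, abs_of_nonneg hα.le,
        abs_of_nonneg (Real.sqrt_nonneg _), hSdef]
      exact div_le_div₀ (by positivity) (mul_le_mul_of_nonneg_left hglb hα.le)
        (Real.sqrt_pos.2 hvpos) (Real.sqrt_le_sqrt hvt)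
    -- two consecutive iterates cannot both be near the minimizer
    have hfar : ∀ t, 1 ≤ t → ∀ ω, cc ≤ |w t ω + δ ^ 2| ∨ cc ≤ |w (t + 1) ω + δ ^ 2| := by
      intro t ht ω
      by_contra hcon
      push_neg at hcon
      obtain ⟨h1, h2⟩ := hcon
      have hnear : |w t ω + δ ^ 2| ≤ 1 := h1.le.trans (min_le_left _ _)
      have hSle := hkey t ht ω hnear
      have htri : |w (t + 1) ω - w t ω| ≤ |w (t + 1) ω + δ ^ 2| + |w t ω + δ ^ 2| := by
        have h3 : w (t + 1) ω - w t ω = (w (t + 1) ω + δ ^ 2) - (w t ω + δ ^ 2) := by ring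
        rw [h3, sub_eq_add_neg]
        refine (abs_add_le _ _).trans ?_
        rw [abs_neg]
      have hcc3 : cc ≤ S / 3 := min_le_right _ _
      linarith
    -- objective function facts
    have hobj : ∀ x : ℝ, (1 / (N : ℝ)) * ∑ n, adamF N b δ n x = x ^ 2 / (2 * δ) + δ * x :=
      adam_objective N b δ hN0 hδ0 hrel
    have hsq : ∀ x : ℝ, x ^ 2 / (2 * δ) + δ * x = (x + δ ^ 2) ^ 2 / (2 * δ) - δ ^ 3 / 2 := by
      intro x
      field_simp
      ring
    have hlb : ∀ x : ℝ, -(δ ^ 3) / 2 ≤ (1 / (N : ℝ)) * ∑ n, adamF N b δ n x := by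
      intro x
      rw [hobj x, hsq x]
      have h0 : 0 ≤ (x + δ ^ 2) ^ 2 / (2 * δ) := by positivity
      linarith
    -- value of the minimum
    have hFminval : Fmin = -(δ ^ 3) / 2 := by
      refine hFmin.unique ⟨⟨-δ ^ 2, ?_⟩, ?_⟩
      · show (1 / (N : ℝ)) * ∑ n, adamF N b δ n (-δ ^ 2) = -(δ ^ 3) / 2
        rw [hobj]
        field_simp
        ring
      · rintro y ⟨x, rfl⟩
        exact hlb x
    -- integral facts
    have hal : ∀ t, -(δ ^ 3) / 2 ≤ ∫ ω, (1 / (N : ℝ)) * ∑ n, adamF N b δ n (w t ω) ∂μ := by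
      intro t
      by_cases hInt : Integrable (fun ω => (1 / (N : ℝ)) * ∑ n, adamF N b δ n (w t ω)) μ
      · have h1 := integral_mono (integrable_const (-(δ ^ 3) / 2)) hInt
          (fun ω => hlb (w t ω))
        rwa [integral_const, probReal_univ, one_smul] at h1
      · rw [integral_undef hInt]
        have h2 : 0 < δ ^ 3 := by positivity
        linarith
    set ε : ℝ := min (cc ^ 2 / (2 * δ)) (δ ^ 3 / 2) with hεdef
    have hε : 0 < ε := lt_min (by positivity) (by positivity)
    have hε1 : ε ≤ cc ^ 2 / (2 * δ) := min_le_left _ _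
    have hε2 : ε ≤ δ ^ 3 / 2 := min_le_right _ _
    have hsum2 : ∀ t, 1 ≤ t → -(δ ^ 3) + ε ≤
        (∫ ω, (1 / (N : ℝ)) * ∑ n, adamF N b δ n (w t ω) ∂μ) +
        ∫ ω, (1 / (N : ℝ)) * ∑ n, adamF N b δ n (w (t + 1) ω) ∂μ := by
      intro t ht
      by_cases h1 : Integrable (fun ω => (1 / (N : ℝ)) * ∑ n, adamF N b δ n (w t ω)) μ
      · by_cases h2 : Integrable (fun ω => (1 / (N : ℝ)) * ∑ n, adamF N b δ n (w (t + 1) ω)) μ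
        · have hpt : ∀ ω, -(δ ^ 3) + cc ^ 2 / (2 * δ) ≤
              (1 / (N : ℝ)) * ∑ n, adamF N b δ n (w t ω) +
              (1 / (N : ℝ)) * ∑ n, adamF N b δ n (w (t + 1) ω) := by
            intro ω
            rw [hobj, hobj, hsq, hsq]
            have ha0 : 0 ≤ (w t ω + δ ^ 2) ^ 2 / (2 * δ) := by positivity
            have hb0' : 0 ≤ (w (t + 1) ω + δ ^ 2) ^ 2 / (2 * δ) := by positivity
            rcases hfar t ht ω with h | h
            · have hc2 : cc ^ 2 ≤ (w t ω + δ ^ 2) ^ 2 := by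
                rw [← sq_abs (w t ω + δ ^ 2)]
                exact pow_le_pow_left₀ hcc.le h 2
              have h3 : cc ^ 2 / (2 * δ) ≤ (w t ω + δ ^ 2) ^ 2 / (2 * δ) :=
                (div_le_div_iff_of_pos_right (by positivity)).2 hc2
              linarith
            · have hc2 : cc ^ 2 ≤ (w (t + 1) ω + δ ^ 2) ^ 2 := by
                rw [← sq_abs (w (t + 1) ω + δ ^ 2)]
                exact pow_le_pow_left₀ hcc.le h 2
              have h3 : cc ^ 2 / (2 * δ) ≤ (w (t + 1) ω + δ ^ 2) ^ 2 / (2 * δ) :=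
                (div_le_div_iff_of_pos_right (by positivity)).2 hc2
              linarith
          have hint := integral_mono (integrable_const (-(δ ^ 3) + cc ^ 2 / (2 * δ)))
            (h1.add h2) hpt
          rw [integral_const, probReal_univ, one_smul,
            integral_add' h1 h2] at hint
          linarith
        · rw [integral_undef h2]
          have := hal t
          linarith
      · rw [integral_undef h1]
        have := hal (t + 1)
        linarith
    -- conclusion
    rw [hFminval] at hT
    have hT2 : Tendsto (fun t => (∫ ω, (1 / (N : ℝ)) * ∑ n, adamF N b δ n (w t ω) ∂μ) +
        ∫ ω, (1 / (N : ℝ)) * ∑ n, adamF N b δ n (w (t + 1) ω) ∂μ) atTop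
        (nhds (-(δ ^ 3) / 2 + -(δ ^ 3) / 2)) :=
      hT.add (hT.comp (tendsto_add_atTop_nat 1))
    have hle := ge_of_tendsto hT2 (Filter.eventually_atTop.2 ⟨1, fun t ht => hsum2 t ht⟩)
    linarith
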